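/- Let c be a nonzero real number, M ≥ 1 a natural number, and φ_1, …, φ_M real numbers such that e^{iφ_j} ≠ e^{iφ_{j'}} whenever j ≠ j'. Regard each squeezed-vacuum coefficient sequence ψ_{c,φ_m} as an element of the Hilbert space ℓ²(ℕ, ℂ). Then for every labeling y : Fin M → ℝ with y_m ∈ {−1, +1} for all m, there exist w ∈ ℓ²(ℕ, ℂ) and b ∈ ℝ such that Re ⟪ψ_{c,φ_m}, w⟫ + b = y_m for all m; in particular, the feature-mapped data are linearly separable in Fock space. -/

import Mathlib

/-- The squeezed-vacuum coefficient sequence: `ψ c φ (2k) =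
(cosh c)^(-1/2) · (√((2k)!)/(2^k k!)) · (-e^{iφ} tanh c)^k`, and `ψ c φ n = 0` for odd `n`. -/
noncomputable def sqVac (c φ : ℝ) : ℕ → ℂ := fun n =>
  if Even n then
    ((Real.sqrt (Real.cosh c))⁻¹ : ℂ) *
      ((Real.sqrt (Nat.factorial n) / (2 ^ (n / 2) * Nat.factorial (n / 2)) : ℝ) : ℂ) *
      (-(Complex.exp (φ * Complex.I)) * (Real.tanh c : ℂ)) ^ (n / 2)
  else 0

/-- Squeezed-vacuum feature vectors with fixed nonzero squeezing strength and pairwise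
distinct phases (mod 2π) are linearly separable in Fock space: any ±1 labeling can be
realized exactly by an affine functional `Re ⟪ψ_m, w⟫ + b` with `w ∈ ℓ²(ℕ, ℂ)`. -/
theorem sqVac_linearly_separable (c : ℝ) (hc : c ≠ 0) (M : ℕ) (hM : 1 ≤ M)
    (φ : Fin M → ℝ)
    (hφ : ∀ j j' : Fin M, j ≠ j' →
      Complex.exp ((φ j : ℝ) * Complex.I) ≠ Complex.exp ((φ j' : ℝ) * Complex.I))
    (y : Fin M → ℝ) (hy : ∀ m : Fin M, y m = -1 ∨ y m = 1) :
    ∃ w : ℕ → ℂ, Memℓp w 2 ∧ ∃ b : ℝ,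
      ∀ m : Fin M,
        (∑' n : ℕ, (starRingEnd ℂ) (sqVac c (φ m) n) * w n).re + b = y m := by
  classical
  set t : ℂ := (Real.tanh c : ℂ) with ht_def
  have ht : t ≠ 0 := by
    simp only [ht_def, Ne, Complex.ofReal_eq_zero]
    rw [Real.tanh_eq_sinh_div_cosh]
    exact div_ne_zero (Real.sinh_ne_zero.mpr hc) (Real.cosh_pos c).ne'
  set a : Fin M → ℂ := fun m => -(Complex.exp ((φ m : ℝ) * Complex.I)) * t with ha_def
  set v : Fin M → ℂ := fun m => (starRingEnd ℂ) (a m) with hv_def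
  have hvinj : Function.Injective v := by
    intro j j' h
    by_contra hne
    apply hφ j j' hne
    have haj : a j = a j' := (starRingEnd ℂ).injective h
    have := mul_right_cancel₀ ht haj
    exact (neg_injective this)
  set V : Matrix (Fin M) (Fin M) ℂ := Matrix.vandermonde v with hV_def
  have hVdet : V.det ≠ 0 := by
    rw [hV_def, Matrix.det_vandermonde_ne_zero_iff]
    exact hvinj
  have hVunit : IsUnit V.det := isUnit_iff_ne_zero.mpr hVdet
  set Y : Fin M → ℂ := fun m => (y m : ℂ) with hY_def
  set z : Fin M → ℂ := V⁻¹.mulVec Y with hz_def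
  have hsolve : V.mulVec z = Y := by
    rw [hz_def, Matrix.mulVec_mulVec, Matrix.mul_nonsing_inv V hVunit, Matrix.one_mulVec]
  -- the real positive coefficients
  set R : ℕ → ℝ := fun k =>
    (Real.sqrt (Real.cosh c))⁻¹ * (Real.sqrt (Nat.factorial (2 * k)) / (2 ^ k * Nat.factorial k))
    with hR_def
  have hRpos : ∀ k, 0 < R k := by
    intro k
    apply mul_pos
    · exact inv_pos.mpr (Real.sqrt_pos.mpr (Real.cosh_pos c))
    · apply div_pos
      · exact Real.sqrt_pos.mpr (by exact_mod_cast Nat.factorial_pos (2 * k))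
      · positivity
  have hRne : ∀ k, ((R k : ℝ) : ℂ) ≠ 0 := fun k =>
    Complex.ofReal_ne_zero.mpr (hRpos k).ne'
  -- the weight vector
  set w : ℕ → ℂ := fun n =>
    if h : Even n ∧ n / 2 < M then z ⟨n / 2, h.2⟩ / ((R (n / 2) : ℝ) : ℂ) else 0 with hw_def
  refine ⟨w, ?_, 0, ?_⟩
  · refine Memℓp.of_exponent_ge (memℓp_zero ?_) (by norm_num)
    apply Set.Finite.subset (Set.finite_Icc 0 (2 * M))
    intro n hn
    simp only [Set.mem_setOf_eq, hw_def] at hn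
    by_cases h : Even n ∧ n / 2 < M
    · exact Set.mem_Icc.mpr ⟨Nat.zero_le _, by omega⟩
    · simp [h] at hn
  · intro m
    have hsq : ∀ k : ℕ, sqVac c (φ m) (2 * k) = ((R k : ℝ) : ℂ) * (a m) ^ k := by
      intro k
      simp only [sqVac]
      rw [if_pos (even_two_mul k)]
      have h2 : 2 * k / 2 = k := by omega
      rw [h2]
      have hb : -(Complex.exp ((φ m : ℝ) * Complex.I)) * ((Real.tanh c : ℝ) : ℂ) = a m := rfl
      rw [hb, hR_def]
      congr 1
      push_cast
      ring
    have hwval : ∀ k : Fin M, w (2 * (k : ℕ)) = z k / ((R (k : ℕ) : ℝ) : ℂ) := by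
      intro k
      have h2 : 2 * (k : ℕ) / 2 = (k : ℕ) := by omega
      have hcond : Even (2 * (k : ℕ)) ∧ 2 * (k : ℕ) / 2 < M := ⟨even_two_mul _, by omega⟩
      simp only [hw_def, dif_pos hcond]
      exact congrArg₂ (· / ·) (congrArg z (Fin.ext h2)) (by rw [h2])
    set s : Finset ℕ := Finset.image (fun k : Fin M => 2 * (k : ℕ)) Finset.univ with hs_def
    have htsum : (∑' n : ℕ, (starRingEnd ℂ) (sqVac c (φ m) n) * w n)
        = ∑ n ∈ s, (starRingEnd ℂ) (sqVac c (φ m) n) * w n := by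
      apply tsum_eq_sum
      intro n hn
      have hwn : w n = 0 := by
        simp only [hw_def]
        rw [dif_neg]
        intro h
        apply hn
        rw [hs_def]
        refine Finset.mem_image.mpr ⟨⟨n / 2, h.2⟩, Finset.mem_univ _, ?_⟩
        show 2 * (n / 2) = n
        obtain ⟨r, hr⟩ := h.1
        omega
      rw [hwn, mul_zero]
    rw [htsum, hs_def, Finset.sum_image (by intro x _ x' _ h; exact Fin.ext (by simp only at h; omega))]
    have : ∀ k : Fin M, (starRingEnd ℂ) (sqVac c (φ m) (2 * (k : ℕ))) * w (2 * (k : ℕ))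
        = v m ^ (k : ℕ) * z k := by
      intro k
      rw [hsq, hwval]
      rw [map_mul, map_pow, Complex.conj_ofReal]
      show ((R (k : ℕ) : ℝ) : ℂ) * v m ^ (k : ℕ) * (z k / ((R (k : ℕ) : ℝ) : ℂ)) = _
      rw [mul_right_comm, mul_comm (((R (k : ℕ) : ℝ) : ℂ)) (z k / ((R (k : ℕ) : ℝ) : ℂ)),
        div_mul_cancel₀ (z k) (hRne (k : ℕ)), mul_comm]
    rw [Finset.sum_congr rfl (fun k _ => this k)]
    have hmv : ∑ k : Fin M, v m ^ (k : ℕ) * z k = Y m := by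
      rw [← hsolve]
      simp [Matrix.mulVec, hV_def, Matrix.vandermonde_apply, dotProduct]
    rw [hmv, hY_def]
    simp
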